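/- Let d ≥ 1, n ≥ 1, and let f₁, …, fₙ : ℝ^d → ℝ each be L_f-smooth for some L_f > 0. Set f = (1/n)·Σ_{i=1}^n fᵢ and suppose f is bounded below with infimum f* > −∞. Let x₁, …, xₙ ∈ ℝ^d, x̄ = (1/n)·Σ_{i=1}^n xᵢ, and ḡ = (1/n)·Σ_{i=1}^n ∇fᵢ(xᵢ). Let (Ω, 𝓕, ℙ) be a probability space, g : Ω → ℝ^d a square-integrable random vector with 𝔼[g] = ḡ, η > 0, and x̄⁺ = x̄ − η·g. Then 𝔼[f(x̄⁺)] − f* ≤ (f(x̄) − f*) − (η/4)·‖ḡ‖² − (η/4)·‖∇f(x̄)‖² + (η·L_f²/2)·(1/n)·Σ_{i=1}^n ‖xᵢ − x̄‖² + (η²·L_f/2)·𝔼[‖g‖²]. -/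

import Mathlib

open MeasureTheory

section Helpers
variable {E : Type*} [NormedAddCommGroup E] [InnerProductSpace ℝ E] [CompleteSpace E]


lemma inner_gradient_eq' {h : E → ℝ} {z : E} (hz : DifferentiableAt ℝ h z) (v : E) :
    inner ℝ (gradient h z) v = fderiv ℝ h z v := by
  rw [hz.hasGradientAt.hasFDerivAt.fderiv]
  rfl

lemma descent_lemma' (h : E → ℝ) (L : ℝ) (hdiff : Differentiable ℝ h)
    (hlip : ∀ a b, ‖gradient h a - gradient h b‖ ≤ L * ‖a - b‖) (x y : E) :
    h y ≤ h x + inner ℝ (gradient h x) (y - x) + L / 2 * ‖y - x‖ ^ 2 := by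
  set v := y - x with hv
  set φ : ℝ → ℝ := fun t => h (x + t • v) - t * inner ℝ (gradient h x) v
      - L * t ^ 2 / 2 * ‖v‖ ^ 2 with hφ
  have hder : ∀ t : ℝ, HasDerivAt φ
      ((inner ℝ (gradient h (x + t • v)) v : ℝ) - inner ℝ (gradient h x) v - L * t * ‖v‖ ^ 2) t := by
    intro t
    have h1 : HasDerivAt (fun t : ℝ => x + t • v) v t := by
      simpa using ((hasDerivAt_id t).smul_const v).const_add x
    have h2 : HasDerivAt (fun t : ℝ => h (x + t • v)) (fderiv ℝ h (x + t • v) v) t :=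
      (hdiff _).hasFDerivAt.comp_hasDerivAt t h1
    rw [← inner_gradient_eq' (hdiff _) v] at h2
    have h3 : HasDerivAt (fun t : ℝ => t * (inner ℝ (gradient h x) v : ℝ))
        (inner ℝ (gradient h x) v : ℝ) t := by
      simpa using (hasDerivAt_id t).mul_const (inner ℝ (gradient h x) v : ℝ)
    have h4 : HasDerivAt (fun t : ℝ => L * t ^ 2 / 2 * ‖v‖ ^ 2) (L * t * ‖v‖ ^ 2) t := by
      have : HasDerivAt (fun t : ℝ => t ^ 2) (2 * t) t := by
        simpa using hasDerivAt_pow 2 t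
      have := ((this.const_mul L).div_const 2).mul_const (‖v‖ ^ 2)
      refine this.congr_deriv ?_
      ring
    exact (h2.sub h3).sub h4
  have hmono : AntitoneOn φ (Set.Icc 0 1) := by
    apply antitoneOn_of_deriv_nonpos (convex_Icc 0 1)
    · exact (Differentiable.continuous fun t => (hder t).differentiableAt).continuousOn
    · exact fun t _ => (hder t).differentiableAt.differentiableWithinAt
    · intro t ht
      rw [interior_Icc] at ht
      rw [(hder t).deriv]
      have hb : (inner ℝ (gradient h (x + t • v)) v : ℝ) - inner ℝ (gradient h x) v
          ≤ L * t * ‖v‖ ^ 2 := by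
        have := real_inner_le_norm (gradient h (x + t • v) - gradient h x) v
        rw [inner_sub_left] at this
        have h5 : ‖gradient h (x + t • v) - gradient h x‖ ≤ L * (t * ‖v‖) := by
          have := hlip (x + t • v) x
          simpa [norm_smul, abs_of_pos ht.1, mul_assoc] using this
        nlinarith [norm_nonneg v, norm_nonneg (gradient h (x + t • v) - gradient h x)]
      linarith
  have h01 : φ 1 ≤ φ 0 := hmono (Set.left_mem_Icc.2 zero_le_one)
    (Set.right_mem_Icc.2 zero_le_one) zero_le_one
  have e0 : φ 0 = h x := by simp [hφ]
  have e1 : φ 1 = h y - inner ℝ (gradient h x) v - L / 2 * ‖v‖ ^ 2 := by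
    simp [hφ, hv]
  rw [e0, e1] at h01
  linarith



lemma gradient_avg' {n : ℕ} (f : Fin n → E → ℝ) (hdiff : ∀ i, Differentiable ℝ (f i)) (z : E) :
    gradient (fun y => (n : ℝ)⁻¹ * ∑ i, f i y) z = (n : ℝ)⁻¹ • ∑ i, gradient (f i) z := by
  have h1 : HasFDerivAt (fun y => ∑ i, f i y) (∑ i, fderiv ℝ (f i) z) z :=
    HasFDerivAt.fun_sum fun i _ => (hdiff i z).hasFDerivAt
  have h2 := (h1.const_mul ((n : ℝ)⁻¹)).hasGradientAt
  rw [h2.gradient, _root_.map_smul, map_sum]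
  rfl

end Helpers

/-- One-step descent estimate for the averaged iterate: if each `fᵢ` is `L_f`-smooth,
`f = (1/n)Σ fᵢ` is bounded below with infimum `f*`, `g` is a random vector with mean
`ḡ = (1/n)Σ ∇fᵢ(xᵢ)`, and `x̄⁺ = x̄ − η g`, then
`𝔼 f(x̄⁺) − f* ≤ (f(x̄) − f*) − (η/4)‖ḡ‖² − (η/4)‖∇f(x̄)‖²
  + (ηL_f²/2)(1/n)Σ‖xᵢ − x̄‖² + (η²L_f/2)𝔼‖g‖²`. -/


theorem one_step_descent_estimate {Ω : Type*} [MeasurableSpace Ω]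
    (μ : Measure Ω) [IsProbabilityMeasure μ]
    (d n : ℕ) (hd : 1 ≤ d) (hn : 1 ≤ n)
    (f : Fin n → EuclideanSpace ℝ (Fin d) → ℝ) (Lf : ℝ) (hLf : 0 < Lf)
    (hdiff : ∀ i, Differentiable ℝ (f i))
    (hlip : ∀ i x y, ‖gradient (f i) x - gradient (f i) y‖ ≤ Lf * ‖x - y‖)
    (F : EuclideanSpace ℝ (Fin d) → ℝ)
    (hF : F = fun y => (n : ℝ)⁻¹ * ∑ i, f i y)
    (hbdd : BddBelow (Set.range F))
    (x : Fin n → EuclideanSpace ℝ (Fin d))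
    (xbar : EuclideanSpace ℝ (Fin d)) (hxbar : xbar = (n : ℝ)⁻¹ • ∑ i, x i)
    (gbar : EuclideanSpace ℝ (Fin d))
    (hgbar : gbar = (n : ℝ)⁻¹ • ∑ i, gradient (f i) (x i))
    (g : Ω → EuclideanSpace ℝ (Fin d)) (hmem : MemLp g 2 μ)
    (hmean : ∫ ω, g ω ∂μ = gbar)
    (η : ℝ) (hη : 0 < η) :
    (∫ ω, F (xbar - η • g ω) ∂μ) - (⨅ y, F y)
      ≤ (F xbar - ⨅ y, F y) - η / 4 * ‖gbar‖ ^ 2 - η / 4 * ‖gradient F xbar‖ ^ 2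
        + η * Lf ^ 2 / 2 * ((n : ℝ)⁻¹ * ∑ i, ‖x i - xbar‖ ^ 2)
        + η ^ 2 * Lf / 2 * ∫ ω, ‖g ω‖ ^ 2 ∂μ := by

  have hn0 : (0:ℝ) < n := by exact_mod_cast hn
  have hFdiff : Differentiable ℝ F := by
    rw [hF]
    exact Differentiable.const_mul (Differentiable.fun_sum fun i _ => hdiff i) _
  have hgradF : ∀ z, gradient F z = (n:ℝ)⁻¹ • ∑ i, gradient (f i) z := by
    intro z; rw [hF]; exact gradient_avg' f hdiff z
  have hlipF : ∀ a b, ‖gradient F a - gradient F b‖ ≤ Lf * ‖a - b‖ := by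
    intro a b
    rw [hgradF, hgradF, ← smul_sub, ← Finset.sum_sub_distrib, norm_smul]
    have h1 : ‖∑ i, (gradient (f i) a - gradient (f i) b)‖ ≤ (n:ℝ) * (Lf * ‖a - b‖) := by
      have := norm_sum_le_of_le Finset.univ (fun i _ => hlip i a b)
      simpa using this
    have h2 : ‖((n:ℝ)⁻¹)‖ = (n:ℝ)⁻¹ := by
      rw [Real.norm_eq_abs, abs_of_pos (by positivity)]
    rw [h2]
    calc (n:ℝ)⁻¹ * ‖∑ i, (gradient (f i) a - gradient (f i) b)‖
        ≤ (n:ℝ)⁻¹ * ((n:ℝ) * (Lf * ‖a - b‖)) := by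
          apply mul_le_mul_of_nonneg_left h1 (by positivity)
      _ = Lf * ‖a - b‖ := by field_simp
  set c0 := gradient F xbar with hc0
  have hpt : ∀ ω, F (xbar - η • g ω)
      ≤ F xbar - η * inner ℝ c0 (g ω) + Lf * η ^ 2 / 2 * ‖g ω‖ ^ 2 := by
    intro ω
    have hd := descent_lemma' F Lf hFdiff hlipF xbar (xbar - η • g ω)
    have e : xbar - η • g ω - xbar = -(η • g ω) := by abel
    rw [e, inner_neg_right, real_inner_smul_right] at hd
    have e2 : ‖-(η • g ω)‖ ^ 2 = η ^ 2 * ‖g ω‖ ^ 2 := by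
      rw [norm_neg, norm_smul, Real.norm_eq_abs, mul_pow, sq_abs]
    rw [e2] at hd
    nlinarith [hd]
  have hgint : Integrable g μ := hmem.integrable one_le_two
  have hnormsq : Integrable (fun ω => ‖g ω‖ ^ 2) μ := by
    have := hmem.integrable_norm_rpow two_ne_zero ENNReal.ofNat_ne_top
    have e : ∀ ω, ‖g ω‖ ^ ((2:ENNReal).toReal) = ‖g ω‖ ^ 2 := by
      intro ω
      rw [ENNReal.toReal_ofNat]
      norm_num [Real.rpow_natCast]
    simpa [e] using this
  have hinner : Integrable (fun ω => (inner ℝ c0 (g ω) : ℝ)) μ :=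
    ContinuousLinearMap.integrable_comp (innerSL ℝ c0) hgint
  have hφint : Integrable
      (fun ω => F xbar - η * inner ℝ c0 (g ω) + Lf * η ^ 2 / 2 * ‖g ω‖ ^ 2) μ :=
    ((integrable_const _).sub (hinner.const_mul η)).add (hnormsq.const_mul _)
  have hgm : AEStronglyMeasurable g μ := hmem.aestronglyMeasurable
  have hFm : AEStronglyMeasurable (fun ω => F (xbar - η • g ω)) μ :=
    hFdiff.continuous.comp_aestronglyMeasurable
      (aestronglyMeasurable_const.sub (hgm.const_smul η))
  set C := ⨅ y, F y with hCdef
  have hC : ∀ z, C ≤ F z := fun z => ciInf_le hbdd z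
  have hFint : Integrable (fun ω => F (xbar - η • g ω)) μ := by
    apply Integrable.mono' ((integrable_const |C|).add hφint.abs) hFm
    filter_upwards with ω
    simp only [Pi.add_apply]
    rw [Real.norm_eq_abs, abs_le]
    constructor
    · have h1 := hC (xbar - η • g ω)
      have h2 := abs_nonneg (F xbar - η * inner ℝ c0 (g ω) + Lf * η ^ 2 / 2 * ‖g ω‖ ^ 2)
      have h3 := neg_abs_le C
      linarith
    · have h1 := hpt ω
      have h2 := le_abs_self (F xbar - η * inner ℝ c0 (g ω) + Lf * η ^ 2 / 2 * ‖g ω‖ ^ 2)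
      have h3 := abs_nonneg C
      linarith
  have hle : ∫ ω, F (xbar - η • g ω) ∂μ
      ≤ ∫ ω, (F xbar - η * inner ℝ c0 (g ω) + Lf * η ^ 2 / 2 * ‖g ω‖ ^ 2) ∂μ :=
    integral_mono hFint hφint hpt
  have hIeq : ∫ ω, (F xbar - η * inner ℝ c0 (g ω) + Lf * η ^ 2 / 2 * ‖g ω‖ ^ 2) ∂μ
      = F xbar - η * inner ℝ c0 gbar + Lf * η ^ 2 / 2 * ∫ ω, ‖g ω‖ ^ 2 ∂μ := by
    have e1 := integral_add ((integrable_const (F xbar)).sub (hinner.const_mul η))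
      (hnormsq.const_mul (Lf * η ^ 2 / 2)) (μ := μ)
    simp only [Pi.sub_apply] at e1
    have e2 := integral_sub (integrable_const (F xbar)) (hinner.const_mul η) (μ := μ)
    rw [e1, e2, integral_const, integral_const_mul, integral_const_mul,
      integral_inner hgint, hmean]
    simp
  have hDbound : ‖c0 - gbar‖ ^ 2 ≤ Lf ^ 2 * ((n:ℝ)⁻¹ * ∑ i, ‖x i - xbar‖ ^ 2) := by
    have hdexp : c0 - gbar = (n:ℝ)⁻¹ • ∑ i, (gradient (f i) xbar - gradient (f i) (x i)) := by
      rw [hc0, hgradF, hgbar, ← smul_sub, ← Finset.sum_sub_distrib]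
    have h1 : ‖c0 - gbar‖ ≤ (n:ℝ)⁻¹ * ∑ i, (Lf * ‖x i - xbar‖) := by
      rw [hdexp, norm_smul, Real.norm_eq_abs, abs_of_pos (by positivity)]
      apply mul_le_mul_of_nonneg_left _ (by positivity)
      apply norm_sum_le_of_le
      intro i _
      rw [norm_sub_rev (x i) xbar]
      exact hlip i xbar (x i)
    have hcs : (∑ i, ‖x i - xbar‖) ^ 2 ≤ (n:ℝ) * ∑ i, ‖x i - xbar‖ ^ 2 := by
      have := sq_sum_le_card_mul_sum_sq (s := (Finset.univ : Finset (Fin n)))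
        (f := fun i => ‖x i - xbar‖)
      simpa using this
    have h2 : ‖c0 - gbar‖ ^ 2 ≤ ((n:ℝ)⁻¹ * ∑ i, (Lf * ‖x i - xbar‖)) ^ 2 :=
      pow_le_pow_left₀ (norm_nonneg _) h1 2
    have h3 : ((n:ℝ)⁻¹ * ∑ i, (Lf * ‖x i - xbar‖)) ^ 2
        = (n:ℝ)⁻¹ ^ 2 * Lf ^ 2 * (∑ i, ‖x i - xbar‖) ^ 2 := by
      rw [← Finset.mul_sum]; ring
    have h4 : (n:ℝ)⁻¹ ^ 2 * Lf ^ 2 * ((n:ℝ) * ∑ i, ‖x i - xbar‖ ^ 2)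
        = Lf ^ 2 * ((n:ℝ)⁻¹ * ∑ i, ‖x i - xbar‖ ^ 2) := by
      field_simp
    calc ‖c0 - gbar‖ ^ 2 ≤ (n:ℝ)⁻¹ ^ 2 * Lf ^ 2 * (∑ i, ‖x i - xbar‖) ^ 2 := by
          rw [← h3]; exact h2
      _ ≤ (n:ℝ)⁻¹ ^ 2 * Lf ^ 2 * ((n:ℝ) * ∑ i, ‖x i - xbar‖ ^ 2) := by
          apply mul_le_mul_of_nonneg_left hcs (by positivity)
      _ = _ := h4
  have hinner_id : (inner ℝ c0 gbar : ℝ) = (‖c0‖ ^ 2 + ‖gbar‖ ^ 2 - ‖c0 - gbar‖ ^ 2) / 2 := by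
    have := norm_sub_sq_real c0 gbar
    linarith
  have hle' : ∫ ω, F (xbar - η • g ω) ∂μ
      ≤ F xbar - η * inner ℝ c0 gbar + Lf * η ^ 2 / 2 * ∫ ω, ‖g ω‖ ^ 2 ∂μ := hIeq ▸ hle
  have key : -(η * inner ℝ c0 gbar)
      ≤ -(η / 4 * ‖gbar‖ ^ 2) - η / 4 * ‖c0‖ ^ 2
        + η * Lf ^ 2 / 2 * ((n:ℝ)⁻¹ * ∑ i, ‖x i - xbar‖ ^ 2) := by
    rw [hinner_id]
    have h1 : η * ‖c0 - gbar‖ ^ 2 ≤ η * (Lf ^ 2 * ((n:ℝ)⁻¹ * ∑ i, ‖x i - xbar‖ ^ 2)) :=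
      mul_le_mul_of_nonneg_left hDbound hη.le
    have h2 : 0 ≤ η * ‖gbar‖ ^ 2 := mul_nonneg hη.le (sq_nonneg _)
    have h3 : 0 ≤ η * ‖c0‖ ^ 2 := mul_nonneg hη.le (sq_nonneg _)
    linarith
  linarith [hle', key]
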